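/- arXiv:2309.08137 — 3 statements merged into one kernel-verified Lean document; each statement's English description precedes it below -/
import Mathlib

section
/- Let γ : [0,1] → ℝ² be a continuous curve of finite length such that γ(1) = γ(0) + (2,0). Suppose there exist s₀, s₁ ∈ [0,1] with γ₂(s₀) = 2 and |γ₂(s₁) − 2| ≥ 1/2 (where γ₂ denotes the second component of γ). Then the length of γ is at least √5. -/
lemma aux_norm (v : EuclideanSpace ℝ (Fin 2)) : ‖v‖ = Real.sqrt ((v 0)^2 + (v 1)^2) := by
  rw [EuclideanSpace.norm_eq, Fin.sum_univ_two]
  simp [Real.norm_eq_abs, sq_abs]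

lemma aux_three (v₁ v₂ v₃ : EuclideanSpace ℝ (Fin 2))
    (hx : v₁ 0 + v₂ 0 + v₃ 0 = 2) (hy : v₁ 1 + v₂ 1 + v₃ 1 = 0)
    (h : 1/2 ≤ |v₂ 1|) : Real.sqrt 5 ≤ ‖v₁‖ + ‖v₂‖ + ‖v₃‖ := by
  set w : EuclideanSpace ℝ (Fin 2) := (EuclideanSpace.equiv (Fin 2) ℝ).symm ![v₂ 0, -(v₂ 1)]
  have hw0 : w 0 = v₂ 0 := rfl
  have hw1 : w 1 = -(v₂ 1) := rfl
  have hwnorm : ‖w‖ = ‖v₂‖ := by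
    rw [aux_norm, aux_norm, hw0, hw1, neg_pow]
    ring_nf
  have htri : ‖v₁ + w + v₃‖ ≤ ‖v₁‖ + ‖w‖ + ‖v₃‖ := norm_add₃_le
  have hval : ‖v₁ + w + v₃‖ = Real.sqrt (4 + (2 * v₂ 1)^2) := by
    rw [aux_norm]
    have e0 : (v₁ + w + v₃) 0 = v₁ 0 + w 0 + v₃ 0 := rfl
    have e1 : (v₁ + w + v₃) 1 = v₁ 1 + w 1 + v₃ 1 := rfl
    rw [e0, e1, hw0, hw1, hx, show v₁ 1 + -v₂ 1 + v₃ 1 = -(2 * v₂ 1) from by linarith, neg_sq]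
    norm_num
  have h5 : Real.sqrt 5 ≤ Real.sqrt (4 + (2 * v₂ 1)^2) := by
    apply Real.sqrt_le_sqrt
    nlinarith [sq_abs (v₂ 1)]
  calc Real.sqrt 5 ≤ ‖v₁ + w + v₃‖ := by rw [hval]; exact h5
    _ ≤ ‖v₁‖ + ‖w‖ + ‖v₃‖ := htri
    _ = ‖v₁‖ + ‖v₂‖ + ‖v₃‖ := by rw [hwnorm]

/-- A continuous curve of finite length in ℝ² (Euclidean norm) whose endpoint is the
starting point shifted by (2,0), which meets the line {x₂ = 2} and also reaches
a point at vertical distance ≥ 1/2 from that line, has length (total variation on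
[0,1]) at least √5. -/
theorem stmt0 (γ : ℝ → EuclideanSpace ℝ (Fin 2))
    (hcont : ContinuousOn γ (Set.Icc (0:ℝ) 1))
    (hfin : eVariationOn γ (Set.Icc (0:ℝ) 1) ≠ ⊤)
    (hper1 : γ (1:ℝ) (0 : Fin 2) = γ (0:ℝ) (0 : Fin 2) + 2)
    (hper2 : γ (1:ℝ) (1 : Fin 2) = γ (0:ℝ) (1 : Fin 2))
    (s₀ s₁ : ℝ) (hs₀ : s₀ ∈ Set.Icc (0:ℝ) 1) (hs₁ : s₁ ∈ Set.Icc (0:ℝ) 1)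
    (h₀ : γ s₀ (1 : Fin 2) = 2) (h₁ : |γ s₁ (1 : Fin 2) - 2| ≥ 1/2) :
    ENNReal.ofReal (Real.sqrt 5) ≤ eVariationOn γ (Set.Icc (0:ℝ) 1) := by
  obtain ⟨hs₀0, hs₀1⟩ := hs₀
  obtain ⟨hs₁0, hs₁1⟩ := hs₁
  set a := min s₀ s₁
  set b := max s₀ s₁
  have hab : a ≤ b := min_le_max
  have ha0 : (0:ℝ) ≤ a := le_min hs₀0 hs₁0
  have hb1 : b ≤ 1 := max_le hs₀1 hs₁1
  set u : ℕ → ℝ := fun n => if n = 0 then 0 else if n = 1 then a else if n = 2 then b else 1 with hu_def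
  have hu : Monotone u := by
    apply monotone_nat_of_le_succ
    intro n
    match n with
    | 0 => simpa [hu_def] using ha0
    | 1 => simpa [hu_def] using hab
    | 2 => simpa [hu_def] using hb1
    | (m+3) => simp [hu_def]
  have hus : ∀ i, u i ∈ Set.Icc (0:ℝ) 1 := by
    intro i
    match i with
    | 0 => simp [hu_def]
    | 1 => exact ⟨ha0, le_trans hab hb1⟩
    | 2 => exact ⟨le_trans ha0 hab, hb1⟩
    | (m+3) => simp [hu_def]
  have key := eVariationOn.sum_le (f := γ) (n := 3) hu hus
  have hsum : (∑ i ∈ Finset.range 3, edist (γ (u (i + 1))) (γ (u i)))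
      = edist (γ a) (γ 0) + edist (γ b) (γ a) + edist (γ 1) (γ b) := by
    rw [Finset.sum_range_succ, Finset.sum_range_succ, Finset.sum_range_one]
    norm_num [hu_def]
  rw [hsum] at key
  refine le_trans ?_ key
  rw [edist_dist, edist_dist, edist_dist, ← ENNReal.ofReal_add dist_nonneg dist_nonneg,
    ← ENNReal.ofReal_add (by positivity) dist_nonneg]
  apply ENNReal.ofReal_le_ofReal
  rw [dist_eq_norm, dist_eq_norm, dist_eq_norm]
  have hxs : (γ a - γ 0) 0 + (γ b - γ a) 0 + (γ 1 - γ b) 0 = 2 := by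
    have e1 : (γ a - γ 0) 0 = γ a 0 - γ 0 0 := rfl
    have e2 : (γ b - γ a) 0 = γ b 0 - γ a 0 := rfl
    have e3 : (γ (1:ℝ) - γ b) 0 = γ (1:ℝ) 0 - γ b 0 := rfl
    rw [e1, e2, e3]; linarith [hper1]
  have hys : (γ a - γ 0) 1 + (γ b - γ a) 1 + (γ 1 - γ b) 1 = 0 := by
    have e1 : (γ a - γ 0) 1 = γ a 1 - γ 0 1 := rfl
    have e2 : (γ b - γ a) 1 = γ b 1 - γ a 1 := rfl
    have e3 : (γ (1:ℝ) - γ b) 1 = γ (1:ℝ) 1 - γ b 1 := rfl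
    rw [e1, e2, e3]; linarith [hper2]
  have hmid : 1/2 ≤ |(γ b - γ a) 1| := by
    have e2 : (γ b - γ a) 1 = γ b 1 - γ a 1 := rfl
    rw [e2]
    rcases le_total s₀ s₁ with h | h
    · have ha : a = s₀ := min_eq_left h
      have hb : b = s₁ := max_eq_right h
      rw [ha, hb, h₀]
      calc (1:ℝ)/2 ≤ |γ s₁ 1 - 2| := h₁
        _ = |γ s₁ 1 - 2| := rfl
    · have ha : a = s₁ := min_eq_right h
      have hb : b = s₀ := max_eq_left h
      rw [ha, hb, h₀]
      rw [abs_sub_comm]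
      exact h₁
  exact aux_three _ _ _ hxs hys hmid
end

section
/- Let γ : [0,1] → ℝ² be a continuous curve of finite length such that γ(1) = γ(0) + (2,0), whose length is at most 2.05, and suppose there exists s₀ ∈ [0,1] with γ₂(s₀) = 2 (where γ₂ denotes the second component of γ). Then for every s ∈ [0,1] one has 3/2 < γ₂(s) < 5/2. -/
lemma coord_le_dist (x y : EuclideanSpace ℝ (Fin 2)) (i : Fin 2) :
    |x i - y i| ≤ dist x y := by
  rw [EuclideanSpace.dist_eq]
  rw [← Real.sqrt_sq_eq_abs]
  apply Real.sqrt_le_sqrt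
  rw [Fin.sum_univ_two]
  have h0 : dist (x 0) (y 0) ^ 2 = (x 0 - y 0) ^ 2 := by
    rw [Real.dist_eq, sq_abs]
  have h1 : dist (x 1) (y 1) ^ 2 = (x 1 - y 1) ^ 2 := by
    rw [Real.dist_eq, sq_abs]
  fin_cases i <;> simp [h0, h1] <;> positivity

lemma dist_sq_eq (x y : EuclideanSpace ℝ (Fin 2)) :
    dist x y ^ 2 = (x 0 - y 0) ^ 2 + (x 1 - y 1) ^ 2 := by
  rw [EuclideanSpace.dist_eq, Real.sq_sqrt (by positivity), Fin.sum_univ_two,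
    Real.dist_eq, Real.dist_eq, sq_abs, sq_abs]

/-- A continuous curve in ℝ² (Euclidean norm) whose endpoint is the starting point
shifted by (2,0), whose length (total variation on [0,1]) is at most 2.05, and which
meets the line {x₂ = 2}, stays confined in the strip 3/2 < x₂ < 5/2. -/
theorem stmt2 (γ : ℝ → EuclideanSpace ℝ (Fin 2))
    (hcont : ContinuousOn γ (Set.Icc (0:ℝ) 1))
    (hlen : eVariationOn γ (Set.Icc (0:ℝ) 1) ≤ ENNReal.ofReal 2.05)
    (hper1 : γ (1:ℝ) (0 : Fin 2) = γ (0:ℝ) (0 : Fin 2) + 2)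
    (hper2 : γ (1:ℝ) (1 : Fin 2) = γ (0:ℝ) (1 : Fin 2))
    (s₀ : ℝ) (hs₀ : s₀ ∈ Set.Icc (0:ℝ) 1)
    (h₀ : γ s₀ (1 : Fin 2) = 2) :
    ∀ s ∈ Set.Icc (0:ℝ) 1, 3/2 < γ s (1 : Fin 2) ∧ γ s (1 : Fin 2) < 5/2 := by
  intro s hs
  by_contra hcon
  push_neg at hcon
  -- the second coordinate at s is far from 2
  have hy : (1:ℝ)/2 ≤ |γ s (1 : Fin 2) - 2| := by
    rcases le_or_gt (γ s (1 : Fin 2)) (3/2) with h | h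
    · rw [abs_sub_comm, abs_of_nonneg (by linarith)]; linarith
    · have := hcon h
      rw [abs_of_nonneg (by linarith)]; linarith
  set a := min s s₀ with ha
  set b := max s s₀ with hb
  have hab : a ≤ b := min_le_max
  have haI : a ∈ Set.Icc (0:ℝ) 1 := by
    constructor
    · exact le_min hs.1 hs₀.1
    · exact min_le_of_left_le hs.2
  have hbI : b ∈ Set.Icc (0:ℝ) 1 := by
    constructor
    · exact le_max_of_le_left hs.1
    · exact max_le hs.2 hs₀.2
  -- vertical gap between γ a and γ b
  have hyab : (1:ℝ)/2 ≤ |γ b (1 : Fin 2) - γ a (1 : Fin 2)| := by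
    rcases min_cases s s₀ with ⟨h1, h2⟩ | ⟨h1, h2⟩
    · have hb' : b = s₀ := max_eq_right h2
      rw [hb', h₀, ha.trans h1, abs_sub_comm]; exact hy
    · have hb' : b = s := max_eq_left (le_of_lt h2)
      rw [hb', ha.trans h1, h₀]; exact hy
  -- partition 0 ≤ a ≤ b ≤ 1
  set u : ℕ → ℝ := fun n => if n = 0 then 0 else if n = 1 then a else if n = 2 then b else 1 with hu
  have humono : Monotone u := by
    apply monotone_nat_of_le_succ
    intro n
    match n with
    | 0 => simpa [hu] using haI.1
    | 1 => simpa [hu] using hab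
    | 2 => simpa [hu] using hbI.2
    | (m+3) => simp [hu]
  have hus : ∀ n, u n ∈ Set.Icc (0:ℝ) 1 := by
    intro n
    match n with
    | 0 => simp [hu]
    | 1 => simpa [hu] using haI
    | 2 => simpa [hu] using hbI
    | (m+3) => simp [hu]
  have hsum := eVariationOn.sum_le (f := γ) (n := 3) humono hus
  have hsum3 : ∑ i ∈ Finset.range 3, edist (γ (u (i+1))) (γ (u i))
      = edist (γ a) (γ 0) + edist (γ b) (γ a) + edist (γ 1) (γ b) := by
    rw [Finset.sum_range_succ, Finset.sum_range_succ, Finset.sum_range_one]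
    simp [hu]
  rw [hsum3] at hsum
  have hsum' := le_trans hsum hlen
  -- convert to real distances
  set d1 := dist (γ a) (γ 0) with hd1
  set d2 := dist (γ b) (γ a) with hd2
  set d3 := dist (γ 1) (γ b) with hd3
  have hreal : d1 + d2 + d3 ≤ 2.05 := by
    have : ENNReal.ofReal (d1 + d2 + d3) ≤ ENNReal.ofReal 2.05 := by
      rw [ENNReal.ofReal_add (by positivity) dist_nonneg,
        ENNReal.ofReal_add (by positivity) dist_nonneg]
      simpa [edist_dist] using hsum'
    rwa [ENNReal.ofReal_le_ofReal_iff (by norm_num)] at this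
  -- real estimates
  have hA : |γ a (0 : Fin 2) - γ 0 (0 : Fin 2)| ≤ d1 := coord_le_dist _ _ _
  have hC : |γ 1 (0 : Fin 2) - γ b (0 : Fin 2)| ≤ d3 := coord_le_dist _ _ _
  have hd2sq : d2 ^ 2 = (γ b (0 : Fin 2) - γ a (0 : Fin 2)) ^ 2
      + (γ b (1 : Fin 2) - γ a (1 : Fin 2)) ^ 2 := dist_sq_eq _ _
  set A := γ a (0 : Fin 2) - γ 0 (0 : Fin 2) with hA'
  set B := γ b (0 : Fin 2) - γ a (0 : Fin 2) with hB'
  set C := γ 1 (0 : Fin 2) - γ b (0 : Fin 2) with hC'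
  have hABC : A + B + C = 2 := by
    rw [hA', hB', hC']; rw [hper1]; ring
  have habsA : A ≤ |A| := le_abs_self A
  have habsC : C ≤ |C| := le_abs_self C
  have hyab2 : (1:ℝ)/4 ≤ (γ b (1 : Fin 2) - γ a (1 : Fin 2)) ^ 2 := by
    have := sq_le_sq' (by linarith [abs_nonneg (γ b (1 : Fin 2) - γ a (1 : Fin 2))] : -(|γ b (1 : Fin 2) - γ a (1 : Fin 2)|) ≤ (1:ℝ)/2) hyab
    calc (1:ℝ)/4 = ((1:ℝ)/2)^2 := by norm_num
    _ ≤ |γ b (1 : Fin 2) - γ a (1 : Fin 2)| ^ 2 := this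
    _ = _ := sq_abs _
  have hd2nn : 0 ≤ d2 := dist_nonneg
  nlinarith [sq_nonneg (d2 - B), sq_nonneg (d2 + B), abs_nonneg A, abs_nonneg C, sq_nonneg B]
end

section
/- For every a ∈ (0, 1/2], the Lebesgue integral of the function y ↦ y₁·y₂/(y₁² + y₂²)² over the rectangle [2a, 1] × [0, 2a] is at most 1/4. -/
open MeasureTheory

/-- Uniform bound on the integral of the Kiselev–Šverák kernel y₁y₂/|y|⁴ over the
rectangle [2a,1] × [0,2a]: for every a ∈ (0,1/2] it is at most 1/4. -/
theorem stmt9 (a : ℝ) (ha : 0 < a) (ha2 : a ≤ 1/2) :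
    ∫ y in Set.Icc (2*a) 1 ×ˢ Set.Icc (0:ℝ) (2*a),
      y.1 * y.2 / (y.1^2 + y.2^2)^2 ≤ 1/4 := by
  have h2a : 0 < 2*a := by linarith
  set s := Set.Icc (2*a) 1 ×ˢ Set.Icc (0:ℝ) (2*a) with hs
  have hcs : IsCompact s := isCompact_Icc.prod isCompact_Icc
  have hpos : ∀ y ∈ s, 0 < y.1 := fun y hy => lt_of_lt_of_le h2a hy.1.1
  have hf : ContinuousOn (fun y : ℝ×ℝ => y.1*y.2/(y.1^2+y.2^2)^2) s := by
    apply ContinuousOn.div (by fun_prop) (by fun_prop)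
    intro y hy
    have := hpos y hy
    positivity
  have hg : ContinuousOn (fun y : ℝ×ℝ => y.1^(-3:ℤ) * y.2) s := by
    apply ContinuousOn.mul _ (by fun_prop)
    exact ContinuousOn.zpow₀ continuousOn_fst _ (fun y hy => Or.inl (hpos y hy).ne')
  have hle : ∫ y in s, y.1*y.2/(y.1^2+y.2^2)^2 ≤ ∫ y in s, y.1^(-3:ℤ)*y.2 := by
    apply setIntegral_mono_on (hf.integrableOn_compact hcs) (hg.integrableOn_compact hcs)
      hcs.measurableSet
    intro y hy
    have h1 : 0 < y.1 := hpos y hy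
    have h2 : 0 ≤ y.2 := hy.2.1
    have key : y.1*y.2/(y.1^2+y.2^2)^2 ≤ y.1*y.2/(y.1^2)^2 := by
      apply div_le_div_of_nonneg_left (by positivity) (by positivity)
      nlinarith [sq_nonneg y.2, sq_nonneg (y.1*y.2)]
    have hz : y.1^(-3:ℤ) = (y.1^3)⁻¹ := by
      rw [zpow_neg, show (3:ℤ) = ((3:ℕ):ℤ) from rfl, zpow_natCast]
    have heq : y.1^(-3:ℤ)*y.2 = y.1*y.2/(y.1^2)^2 := by
      rw [hz]; field_simp
    rw [heq]; exact key
  refine hle.trans ?_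
  have hprod : ∫ y in s, y.1^(-3:ℤ) * y.2
      = (∫ x in Set.Icc (2*a) 1, x^(-3:ℤ)) * ∫ x in Set.Icc (0:ℝ) (2*a), x := by
    rw [hs, Measure.volume_eq_prod]
    exact setIntegral_prod_mul (fun x : ℝ => x^(-3:ℤ)) (fun x : ℝ => x) _ _
  rw [hprod]
  have hab : 2*a ≤ 1 := by linarith
  have h1 : (∫ x in Set.Icc (2*a) 1, x^(-3:ℤ)) = ((1:ℝ) - (2*a)^(-2:ℤ))/(-2) := by
    rw [integral_Icc_eq_integral_Ioc, ← intervalIntegral.integral_of_le hab,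
      integral_zpow (Or.inr ⟨by norm_num, by
        rw [Set.uIcc_of_le hab, Set.mem_Icc]; push_neg; intro h; linarith⟩)]
    all_goals norm_num
  have h2 : (∫ x in Set.Icc (0:ℝ) (2*a), x) = ((2*a)^2 - 0^2)/2 := by
    rw [integral_Icc_eq_integral_Ioc, ← intervalIntegral.integral_of_le h2a.le,
      integral_id]
  rw [h1, h2]
  have hz2 : (2*a)^(-2:ℤ) = ((2*a)^2)⁻¹ := by rw [zpow_neg, show (2:ℤ) = ((2:ℕ):ℤ) from rfl, zpow_natCast]
  have : ((1:ℝ) - (2*a)^(-2:ℤ))/(-2) * (((2*a)^2 - 0^2)/2) = 1/4 - a^2 := by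
    rw [hz2]
    field_simp
    ring
  rw [this]
  nlinarith [sq_nonneg a]
end
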